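/- arXiv:1211.3773 — 2 statements merged into one kernel-verified Lean document; each statement's English description precedes it below -/
import Mathlib

section
/- Let (A, L, ω) be a Lie-Rinehart algebra, V^ℓ(L) its left universal enveloping algebra (the quotient of the positive tensor algebra T_k^+(A⊕L) by the relations a⊗b − ab, a⊗ξ − a·ξ, ξ⊗η − η⊗ξ − [ξ,η], and ξ⊗a − a⊗ξ − ω(ξ)(a)), and V^r(L) the right universal enveloping algebra of L viewed as a right Lie-Rinehart algebra (quotient by the relations a⊗b − ab, ξ⊗a − ξ·a, ξ⊗η − η⊗ξ − [ξ,η], and ξ⊗a − a⊗ξ − ω(ξ)(a)). Then there is a unique k-algebra isomorphism Ξ : V^ℓ(L) → (V^r(L))^op determined by Ξ(a) = a for a ∈ A and Ξ(D) = −D for D ∈ L. -/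
structure LieRinehartStr (k A L : Type*) [CommRing k] [CommRing A] [Algebra k A]
    [AddCommGroup L] [Module k L] [Module A L] where
  bracket : L → L → L
  anchor : L →ₗ[A] Derivation k A A
  bracket_add_left : ∀ x y z : L, bracket (x + y) z = bracket x z + bracket y z
  bracket_add_right : ∀ x y z : L, bracket x (y + z) = bracket x y + bracket x z
  bracket_smul_left : ∀ (c : k) (x y : L), bracket (c • x) y = c • bracket x y
  bracket_smul_right : ∀ (c : k) (x y : L), bracket x (c • y) = c • bracket x y
  bracket_self : ∀ x : L, bracket x x = 0
  jacobi : ∀ x y z : L, bracket x (bracket y z) =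
      bracket (bracket x y) z + bracket y (bracket x z)
  anchor_bracket : ∀ x y : L, anchor (bracket x y) = ⁅anchor x, anchor y⁆
  compat : ∀ (x y : L) (f : A), bracket x (f • y) = anchor x f • y + f • bracket x y

variable (k A L : Type*) [CommRing k] [CommRing A] [Algebra k A]
  [AddCommGroup L] [Module k L] [Module A L]

/-- the canonical map `A → T_k(A ⊕ L)`. -/
noncomputable def iotaA (a : A) : TensorAlgebra k (A × L) :=
  TensorAlgebra.ι k ((a, 0) : A × L)

/-- the canonical map `L → T_k(A ⊕ L)`. -/
noncomputable def iotaL (x : L) : TensorAlgebra k (A × L) :=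
  TensorAlgebra.ι k ((0, x) : A × L)

/-- The defining relations of the left universal enveloping algebra `V^ℓ(L)`. -/
inductive envRelL (S : LieRinehartStr k A L) :
    TensorAlgebra k (A × L) → TensorAlgebra k (A × L) → Prop
  | mulA (a b : A) : envRelL S (iotaA k A L a * iotaA k A L b) (iotaA k A L (a * b))
  | smul (a : A) (x : L) : envRelL S (iotaA k A L a * iotaL k A L x) (iotaL k A L (a • x))
  | lie (x y : L) : envRelL S (iotaL k A L x * iotaL k A L y - iotaL k A L y * iotaL k A L x)
      (iotaL k A L (S.bracket x y))
  | anchor (x : L) (a : A) :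
      envRelL S (iotaL k A L x * iotaA k A L a - iotaA k A L a * iotaL k A L x)
        (iotaA k A L (S.anchor x a))
  | one : envRelL S (iotaA k A L 1) 1

/-- The defining relations of the right universal enveloping algebra `V^r(L)`
(the right action of `A` on `L` is `x · a := a • x`, since `A` is commutative). -/
inductive envRelR (S : LieRinehartStr k A L) :
    TensorAlgebra k (A × L) → TensorAlgebra k (A × L) → Prop
  | mulA (a b : A) : envRelR S (iotaA k A L a * iotaA k A L b) (iotaA k A L (a * b))
  | smul (a : A) (x : L) : envRelR S (iotaL k A L x * iotaA k A L a) (iotaL k A L (a • x))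
  | lie (x y : L) : envRelR S (iotaL k A L x * iotaL k A L y - iotaL k A L y * iotaL k A L x)
      (iotaL k A L (S.bracket x y))
  | anchor (x : L) (a : A) :
      envRelR S (iotaL k A L x * iotaA k A L a - iotaA k A L a * iotaL k A L x)
        (iotaA k A L (S.anchor x a))
  | one : envRelR S (iotaA k A L 1) 1

section Aux

open MulOpposite

/-- The linear generator map `(a, x) ↦ op (mk (ι (a, -x)))`. -/
noncomputable def genMap (r : TensorAlgebra k (A × L) → TensorAlgebra k (A × L) → Prop) :
    A × L →ₗ[k] (RingQuot r)ᵐᵒᵖ :=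
  (opLinearEquiv k).toLinearMap ∘ₗ
    (RingQuot.mkAlgHom k r).toLinearMap ∘ₗ (TensorAlgebra.ι k) ∘ₗ
      ((LinearMap.id : A →ₗ[k] A).prodMap (-(LinearMap.id : L →ₗ[k] L)))

/-- The algebra map `T_k(A⊕L) → (RingQuot r)ᵐᵒᵖ` induced by `genMap`. -/
noncomputable def preMap (r : TensorAlgebra k (A × L) → TensorAlgebra k (A × L) → Prop) :
    TensorAlgebra k (A × L) →ₐ[k] (RingQuot r)ᵐᵒᵖ :=
  TensorAlgebra.lift k (genMap k A L r)

variable {k A L}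

lemma preMap_iotaA {r : TensorAlgebra k (A × L) → TensorAlgebra k (A × L) → Prop} (a : A) :
    preMap k A L r (iotaA k A L a) = op (RingQuot.mkAlgHom k r (iotaA k A L a)) := by
  simp [preMap, genMap, iotaA, TensorAlgebra.lift_ι_apply]

lemma preMap_iotaL {r : TensorAlgebra k (A × L) → TensorAlgebra k (A × L) → Prop} (x : L) :
    preMap k A L r (iotaL k A L x) = op (-(RingQuot.mkAlgHom k r (iotaL k A L x))) := by
  have h1 : preMap k A L r (iotaL k A L x) =
      op (RingQuot.mkAlgHom k r (TensorAlgebra.ι k (((0 : A), -x) : A × L))) := by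
    simp [preMap, genMap, iotaL, TensorAlgebra.lift_ι_apply]
  have h2 : (TensorAlgebra.ι k (((0 : A), -x) : A × L)) = -(iotaL k A L x) := by
    rw [iotaL, ← map_neg]
    congr 1
    ext <;> simp
  rw [h1, h2]
  exact congrArg op (map_neg _ _)

section RelCases

variable {S : LieRinehartStr k A L}
  {r : TensorAlgebra k (A × L) → TensorAlgebra k (A × L) → Prop}

lemma preMap_case_mulA (a b : A)
    (h : RingQuot.mkAlgHom k r (iotaA k A L b * iotaA k A L a)
        = RingQuot.mkAlgHom k r (iotaA k A L (b * a))) :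
    preMap k A L r (iotaA k A L a * iotaA k A L b) = preMap k A L r (iotaA k A L (a * b)) := by
  rw [map_mul, preMap_iotaA, preMap_iotaA, preMap_iotaA, ← op_mul]
  congr 1
  rw [map_mul] at h
  rw [h, mul_comm b a]

lemma preMap_case_smul (a : A) (x : L)
    (h : RingQuot.mkAlgHom k r (iotaL k A L x * iotaA k A L a)
        = RingQuot.mkAlgHom k r (iotaL k A L (a • x))) :
    preMap k A L r (iotaA k A L a * iotaL k A L x) = preMap k A L r (iotaL k A L (a • x)) := by
  rw [map_mul, preMap_iotaA, preMap_iotaL, preMap_iotaL, ← op_mul]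
  congr 1
  rw [map_mul] at h
  rw [← h]
  exact neg_mul (RingQuot.mkAlgHom k r (iotaL k A L x)) (RingQuot.mkAlgHom k r (iotaA k A L a))

lemma preMap_case_smul' (a : A) (x : L)
    (h : RingQuot.mkAlgHom k r (iotaA k A L a * iotaL k A L x)
        = RingQuot.mkAlgHom k r (iotaL k A L (a • x))) :
    preMap k A L r (iotaL k A L x * iotaA k A L a) = preMap k A L r (iotaL k A L (a • x)) := by
  rw [map_mul, preMap_iotaL, preMap_iotaA, preMap_iotaL, ← op_mul]
  congr 1
  rw [map_mul] at h
  rw [← h]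
  exact mul_neg (RingQuot.mkAlgHom k r (iotaA k A L a)) (RingQuot.mkAlgHom k r (iotaL k A L x))

lemma preMap_case_lie (x y z : L)
    (h : RingQuot.mkAlgHom k r (iotaL k A L x * iotaL k A L y - iotaL k A L y * iotaL k A L x)
        = RingQuot.mkAlgHom k r (iotaL k A L z)) :
    preMap k A L r (iotaL k A L x * iotaL k A L y - iotaL k A L y * iotaL k A L x)
      = preMap k A L r (iotaL k A L z) := by
  rw [map_sub, map_mul, map_mul, preMap_iotaL, preMap_iotaL, preMap_iotaL,
    ← op_mul, ← op_mul, ← op_sub]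
  congr 1
  rw [map_sub, map_mul, map_mul] at h
  rw [← h]
  have e1 : -(RingQuot.mkAlgHom k r (iotaL k A L y)) * -(RingQuot.mkAlgHom k r (iotaL k A L x))
      = RingQuot.mkAlgHom k r (iotaL k A L y) * RingQuot.mkAlgHom k r (iotaL k A L x) :=
    neg_mul_neg (RingQuot.mkAlgHom k r (iotaL k A L y)) (RingQuot.mkAlgHom k r (iotaL k A L x))
  have e2 : -(RingQuot.mkAlgHom k r (iotaL k A L x)) * -(RingQuot.mkAlgHom k r (iotaL k A L y))
      = RingQuot.mkAlgHom k r (iotaL k A L x) * RingQuot.mkAlgHom k r (iotaL k A L y) :=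
    neg_mul_neg (RingQuot.mkAlgHom k r (iotaL k A L x)) (RingQuot.mkAlgHom k r (iotaL k A L y))
  rw [e1, e2]
  exact (neg_sub (RingQuot.mkAlgHom k r (iotaL k A L x) * RingQuot.mkAlgHom k r (iotaL k A L y))
    (RingQuot.mkAlgHom k r (iotaL k A L y) * RingQuot.mkAlgHom k r (iotaL k A L x))).symm

lemma preMap_case_anchor (x : L) (a b : A)
    (h : RingQuot.mkAlgHom k r (iotaL k A L x * iotaA k A L a - iotaA k A L a * iotaL k A L x)
        = RingQuot.mkAlgHom k r (iotaA k A L b)) :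
    preMap k A L r (iotaL k A L x * iotaA k A L a - iotaA k A L a * iotaL k A L x)
      = preMap k A L r (iotaA k A L b) := by
  rw [map_sub, map_mul, map_mul, preMap_iotaL, preMap_iotaA, preMap_iotaA,
    ← op_mul, ← op_mul, ← op_sub]
  congr 1
  rw [map_sub, map_mul, map_mul] at h
  rw [← h]
  have e1 : RingQuot.mkAlgHom k r (iotaA k A L a) * -(RingQuot.mkAlgHom k r (iotaL k A L x))
      = -(RingQuot.mkAlgHom k r (iotaA k A L a) * RingQuot.mkAlgHom k r (iotaL k A L x)) :=
    mul_neg (RingQuot.mkAlgHom k r (iotaA k A L a)) (RingQuot.mkAlgHom k r (iotaL k A L x))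
  have e2 : -(RingQuot.mkAlgHom k r (iotaL k A L x)) * RingQuot.mkAlgHom k r (iotaA k A L a)
      = -(RingQuot.mkAlgHom k r (iotaL k A L x) * RingQuot.mkAlgHom k r (iotaA k A L a)) :=
    neg_mul (RingQuot.mkAlgHom k r (iotaL k A L x)) (RingQuot.mkAlgHom k r (iotaA k A L a))
  rw [e1, e2]
  exact neg_sub_neg (RingQuot.mkAlgHom k r (iotaA k A L a) * RingQuot.mkAlgHom k r (iotaL k A L x))
    (RingQuot.mkAlgHom k r (iotaL k A L x) * RingQuot.mkAlgHom k r (iotaA k A L a))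

lemma preMap_case_one
    (h : RingQuot.mkAlgHom k r (iotaA k A L 1) = RingQuot.mkAlgHom k r 1) :
    preMap k A L r (iotaA k A L 1) = preMap k A L r 1 := by
  rw [preMap_iotaA, h, map_one, map_one, op_one]

end RelCases

lemma preMap_relL (S : LieRinehartStr k A L) : ∀ ⦃x y⦄, envRelL k A L S x y →
    preMap k A L (envRelR k A L S) x = preMap k A L (envRelR k A L S) y := by
  intro u v h
  induction h with
  | mulA a b => exact preMap_case_mulA a b (RingQuot.mkAlgHom_rel _ (envRelR.mulA (k := k) (A := A) (L := L) (S := S) b a))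
  | smul a x => exact preMap_case_smul a x (RingQuot.mkAlgHom_rel _ (envRelR.smul (k := k) (A := A) (L := L) (S := S) a x))
  | lie x y => exact preMap_case_lie x y _ (RingQuot.mkAlgHom_rel _ (envRelR.lie (k := k) (A := A) (L := L) (S := S) x y))
  | anchor x a => exact preMap_case_anchor x a _ (RingQuot.mkAlgHom_rel _ (envRelR.anchor (k := k) (A := A) (L := L) (S := S) x a))
  | one => exact preMap_case_one (RingQuot.mkAlgHom_rel _ (envRelR.one (k := k) (A := A) (L := L) (S := S)))

lemma preMap_relR (S : LieRinehartStr k A L) : ∀ ⦃x y⦄, envRelR k A L S x y →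
    preMap k A L (envRelL k A L S) x = preMap k A L (envRelL k A L S) y := by
  intro u v h
  induction h with
  | mulA a b => exact preMap_case_mulA a b (RingQuot.mkAlgHom_rel _ (envRelL.mulA (k := k) (A := A) (L := L) (S := S) b a))
  | smul a x => exact preMap_case_smul' a x (RingQuot.mkAlgHom_rel _ (envRelL.smul (k := k) (A := A) (L := L) (S := S) a x))
  | lie x y => exact preMap_case_lie x y _ (RingQuot.mkAlgHom_rel _ (envRelL.lie (k := k) (A := A) (L := L) (S := S) x y))
  | anchor x a => exact preMap_case_anchor x a _ (RingQuot.mkAlgHom_rel _ (envRelL.anchor (k := k) (A := A) (L := L) (S := S) x a))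
  | one => exact preMap_case_one (RingQuot.mkAlgHom_rel _ (envRelL.one (k := k) (A := A) (L := L) (S := S)))

/-- The canonical map `V^ℓ(L) → (V^r(L))ᵐᵒᵖ`. -/
noncomputable def XiMap (S : LieRinehartStr k A L) :
    RingQuot (envRelL k A L S) →ₐ[k] (RingQuot (envRelR k A L S))ᵐᵒᵖ :=
  RingQuot.liftAlgHom k ⟨preMap k A L (envRelR k A L S), preMap_relL S⟩

/-- The canonical map `V^r(L) → (V^ℓ(L))ᵐᵒᵖ`. -/
noncomputable def ThetaMap (S : LieRinehartStr k A L) :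
    RingQuot (envRelR k A L S) →ₐ[k] (RingQuot (envRelL k A L S))ᵐᵒᵖ :=
  RingQuot.liftAlgHom k ⟨preMap k A L (envRelL k A L S), preMap_relR S⟩

lemma XiMap_mk (S : LieRinehartStr k A L) (t : TensorAlgebra k (A × L)) :
    XiMap S (RingQuot.mkAlgHom k (envRelL k A L S) t) = preMap k A L (envRelR k A L S) t :=
  RingQuot.liftAlgHom_mkAlgHom_apply _ _ _ _

lemma ThetaMap_mk (S : LieRinehartStr k A L) (t : TensorAlgebra k (A × L)) :
    ThetaMap S (RingQuot.mkAlgHom k (envRelR k A L S) t) = preMap k A L (envRelL k A L S) t :=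
  RingQuot.liftAlgHom_mkAlgHom_apply _ _ _ _

lemma iota_split (p : A × L) :
    (TensorAlgebra.ι k p : TensorAlgebra k (A × L)) = iotaA k A L p.1 + iotaL k A L p.2 := by
  rw [iotaA, iotaL, ← map_add]
  congr 1
  simp

/-- Flip an algebra hom into an opposite algebra. -/
noncomputable def opFlip {B C : Type*} [Semiring B] [Semiring C] [Algebra k B] [Algebra k C]
    (f : B →ₐ[k] Cᵐᵒᵖ) : Bᵐᵒᵖ →ₐ[k] C where
  toFun w := unop (f (unop w))
  map_one' := by simp
  map_mul' w₁ w₂ := by simp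
  map_zero' := by simp
  map_add' w₁ w₂ := by simp
  commutes' r := by simp [MulOpposite.algebraMap_apply]

lemma opFlip_apply {B C : Type*} [Semiring B] [Semiring C] [Algebra k B] [Algebra k C]
    (f : B →ₐ[k] Cᵐᵒᵖ) (w : Bᵐᵒᵖ) : opFlip f w = unop (f (unop w)) := rfl

variable (S : LieRinehartStr k A L)

lemma roundXiA (a : A) :
    opFlip (ThetaMap S) (XiMap S (RingQuot.mkAlgHom k (envRelL k A L S) (iotaA k A L a)))
      = RingQuot.mkAlgHom k (envRelL k A L S) (iotaA k A L a) := by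
  rw [XiMap_mk, preMap_iotaA, opFlip_apply, unop_op, ThetaMap_mk, preMap_iotaA, unop_op]

lemma roundXiL (x : L) :
    opFlip (ThetaMap S) (XiMap S (RingQuot.mkAlgHom k (envRelL k A L S) (iotaL k A L x)))
      = RingQuot.mkAlgHom k (envRelL k A L S) (iotaL k A L x) := by
  rw [XiMap_mk, preMap_iotaL, opFlip_apply, unop_op]
  have h1 : ThetaMap S (-(RingQuot.mkAlgHom k (envRelR k A L S) (iotaL k A L x)))
      = -(ThetaMap S (RingQuot.mkAlgHom k (envRelR k A L S) (iotaL k A L x))) := map_neg _ _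
  rw [h1, ThetaMap_mk, preMap_iotaL]
  simp

lemma roundThetaA (a : A) :
    opFlip (XiMap S) (ThetaMap S (RingQuot.mkAlgHom k (envRelR k A L S) (iotaA k A L a)))
      = RingQuot.mkAlgHom k (envRelR k A L S) (iotaA k A L a) := by
  rw [ThetaMap_mk, preMap_iotaA, opFlip_apply, unop_op, XiMap_mk, preMap_iotaA, unop_op]

lemma roundThetaL (x : L) :
    opFlip (XiMap S) (ThetaMap S (RingQuot.mkAlgHom k (envRelR k A L S) (iotaL k A L x)))
      = RingQuot.mkAlgHom k (envRelR k A L S) (iotaL k A L x) := by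
  rw [ThetaMap_mk, preMap_iotaL, opFlip_apply, unop_op]
  have h1 : XiMap S (-(RingQuot.mkAlgHom k (envRelL k A L S) (iotaL k A L x)))
      = -(XiMap S (RingQuot.mkAlgHom k (envRelL k A L S) (iotaL k A L x))) := map_neg _ _
  rw [h1, XiMap_mk, preMap_iotaL]
  simp

lemma psi_comp_Xi : (opFlip (ThetaMap S)).comp (XiMap S) = AlgHom.id k _ := by
  apply RingQuot.ringQuot_ext'
  apply TensorAlgebra.hom_ext
  apply LinearMap.ext
  intro p
  simp only [LinearMap.coe_comp, Function.comp_apply, AlgHom.toLinearMap_apply, AlgHom.coe_comp,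
    AlgHom.coe_id, id_eq]
  rw [iota_split, map_add (RingQuot.mkAlgHom k (envRelL k A L S)) _ _,
    map_add (XiMap S) _ _, map_add (opFlip (ThetaMap S)) _ _, roundXiA, roundXiL]

lemma psi_comp_Theta : (opFlip (XiMap S)).comp (ThetaMap S) = AlgHom.id k _ := by
  apply RingQuot.ringQuot_ext'
  apply TensorAlgebra.hom_ext
  apply LinearMap.ext
  intro p
  simp only [LinearMap.coe_comp, Function.comp_apply, AlgHom.toLinearMap_apply, AlgHom.coe_comp,
    AlgHom.coe_id, id_eq]
  rw [iota_split, map_add (RingQuot.mkAlgHom k (envRelR k A L S)) _ _,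
    map_add (ThetaMap S) _ _, map_add (opFlip (XiMap S)) _ _, roundThetaA, roundThetaL]

end Aux

/-- there is a unique `k`-algebra isomorphism
`Ξ : V^ℓ(L) → (V^r(L))ᵒᵖ` with `Ξ(a) = a` and `Ξ(D) = -D`. -/
theorem statement3 (S : LieRinehartStr k A L) :
    ∃! Xi : RingQuot (envRelL k A L S) →ₐ[k] (RingQuot (envRelR k A L S))ᵐᵒᵖ,
      (∀ a : A, Xi (RingQuot.mkAlgHom k (envRelL k A L S) (iotaA k A L a)) =
          MulOpposite.op (RingQuot.mkAlgHom k (envRelR k A L S) (iotaA k A L a))) ∧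
      (∀ x : L, Xi (RingQuot.mkAlgHom k (envRelL k A L S) (iotaL k A L x)) =
          MulOpposite.op (RingQuot.mkAlgHom k (envRelR k A L S) (iotaL k A L (-x)))) ∧
      Function.Bijective ⇑Xi := by
  have iotaL_neg : ∀ x : L, iotaL k A L (-x) = -(iotaL k A L x) := by
    intro x
    rw [iotaL, iotaL, ← map_neg]
    congr 1
    ext <;> simp
  have hXA : ∀ a : A, XiMap S (RingQuot.mkAlgHom k (envRelL k A L S) (iotaA k A L a)) =
      MulOpposite.op (RingQuot.mkAlgHom k (envRelR k A L S) (iotaA k A L a)) := by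
    intro a; rw [XiMap_mk, preMap_iotaA]
  have hXL : ∀ x : L, XiMap S (RingQuot.mkAlgHom k (envRelL k A L S) (iotaL k A L x)) =
      MulOpposite.op (RingQuot.mkAlgHom k (envRelR k A L S) (iotaL k A L (-x))) := by
    intro x
    rw [XiMap_mk, preMap_iotaL, iotaL_neg, map_neg]
  refine ⟨XiMap S, ⟨hXA, hXL, ?_, ?_⟩, ?_⟩
  · -- injective
    intro u v huv
    have hu := AlgHom.congr_fun (psi_comp_Xi S) u
    have hv := AlgHom.congr_fun (psi_comp_Xi S) v
    simp only [AlgHom.coe_comp, Function.comp_apply, AlgHom.coe_id, id_eq] at hu hv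
    rw [← hu, ← hv, huv]
  · -- surjective
    intro w
    refine ⟨MulOpposite.unop (ThetaMap S w.unop), ?_⟩
    have h := AlgHom.congr_fun (psi_comp_Theta S) (MulOpposite.unop w)
    simp only [AlgHom.coe_comp, Function.comp_apply, AlgHom.coe_id, id_eq, opFlip_apply] at h
    have h2 := congrArg MulOpposite.op h
    rwa [MulOpposite.op_unop, MulOpposite.op_unop] at h2
  · -- uniqueness
    intro Xi' h'
    obtain ⟨h1, h2, -⟩ := h'
    apply RingQuot.ringQuot_ext'
    apply TensorAlgebra.hom_ext
    apply LinearMap.ext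
    intro p
    simp only [LinearMap.coe_comp, Function.comp_apply, AlgHom.toLinearMap_apply,
      AlgHom.coe_comp]
    rw [iota_split, map_add (RingQuot.mkAlgHom k (envRelL k A L S)) _ _,
      map_add Xi' _ _, map_add (XiMap S) _ _, h1, h2, hXA, hXL]
end

section
/- Let A be a commutative k-algebra which is a Poisson algebra with bracket {·,·}. Then the A-module D_A of Kähler differentials of A over k carries a Lie-Rinehart algebra structure over A, with Lie bracket determined by [df, dg] = d{f,g} and [df, g·dg'] = {f,g}·dg' + g·[df, dg'], and anchor ω(df) = {f, ·} (the Hamiltonian derivation of f); in particular the bracket so defined satisfies the Jacobi identity and the anchor is an A-linear Lie algebra morphism to Der_k(A) satisfying the Lie-Rinehart compatibility condition. -/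
namespace S15

open KaehlerDifferential Finsupp

variable {k A : Type*} [CommRing k] [CommRing A] [Algebra k A]

/-- induction principle for Kähler differentials -/
theorem kd_ind {p : KaehlerDifferential k A → Prop}
    (hd : ∀ f : A, p (D k A f)) (h0 : p 0)
    (hadd : ∀ x y, p x → p y → p (x + y))
    (hsmul : ∀ (a : A) x, p x → p (a • x)) : ∀ x, p x := by
  intro x
  have hx : x ∈ Submodule.span A (Set.range (D k A)) := by
    rw [KaehlerDifferential.span_range_derivation]; trivial
  refine Submodule.span_induction ?_ h0 ?_ ?_ hx
  · rintro _ ⟨f, rfl⟩; exact hd f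
  · intro x y _ _ hx hy; exact hadd x y hx hy
  · intro a x _ hx; exact hsmul a x hx

noncomputable def rawLD (Dv : Derivation k A A) : (A →₀ A) →ₗ[k] KaehlerDifferential k A :=
  Finsupp.lsum k fun g =>
    ((LinearMap.toSpanSingleton A _ (D k A g)).restrictScalars k).comp Dv.toLinearMap
      + (LinearMap.toSpanSingleton A _ (D k A (Dv g))).restrictScalars k

@[simp] theorem rawLD_single (Dv : Derivation k A A) (g f : A) :
    rawLD Dv (single g f) = Dv f • D k A g + f • D k A (Dv g) := by
  simp [rawLD, LinearMap.toSpanSingleton_apply]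

theorem rawLD_smul (Dv : Derivation k A A) (a : A) (v : A →₀ A) :
    rawLD Dv (a • v) = a • rawLD Dv v
      + Dv a • Finsupp.linearCombination A (D k A) v := by
  induction v using Finsupp.induction_linear with
  | zero => simp
  | add f g hf hg =>
      rw [smul_add, map_add, hf, map_add, hg, map_add]
      simp only [smul_add]; abel
  | single g f =>
      rw [smul_single, rawLD_single, linearCombination_single, rawLD_single]
      rw [smul_eq_mul, Derivation.leibniz]
      simp only [smul_eq_mul]
      module


theorem rawLD_ker (Dv : Derivation k A A) (v : A →₀ A)
    (hv : v ∈ LinearMap.ker (Finsupp.linearCombination A (D k A) :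
        (A →₀ A) →ₗ[A] KaehlerDifferential k A)) : rawLD Dv v = 0 := by
  let S : Submodule A (A →₀ A) :=
    { carrier := {w | rawLD Dv w = 0 ∧ Finsupp.linearCombination A (D k A) w = 0}
      add_mem' := by
        rintro w w' ⟨h1, h2⟩ ⟨h3, h4⟩
        exact ⟨by rw [map_add, h1, h3, add_zero], by rw [map_add, h2, h4, add_zero]⟩
      zero_mem' := ⟨map_zero _, map_zero _⟩
      smul_mem' := by
        rintro a w ⟨h1, h2⟩
        refine ⟨?_, by rw [map_smul, h2, smul_zero]⟩
        rw [rawLD_smul, h1, h2, smul_zero, smul_zero, add_zero] }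
  have hker : KaehlerDifferential.kerTotal k A ≤ S := by
    rw [KaehlerDifferential.kerTotal, Submodule.span_le]
    rintro w ((⟨⟨x, y⟩, rfl⟩ | ⟨⟨x, y⟩, rfl⟩) | ⟨r, rfl⟩)
    · constructor
      · simp only [map_add, map_sub, rawLD_single, map_add (D k A), map_add Dv]
        simp [smul_add]
      · simp [map_add (D k A)]
    · constructor
      · simp only [map_add, map_sub, rawLD_single, Derivation.leibniz]
        rw [Derivation.map_one_eq_zero, sub_eq_zero]
        simp only [zero_smul, one_smul, zero_add, map_add (D k A), smul_eq_mul,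
          Derivation.leibniz]
        module
      · simp only [map_sub, map_add, linearCombination_single, sub_eq_zero, one_smul]
        rw [Derivation.leibniz]
    · constructor
      · simp [Derivation.map_algebraMap]
      · simp
  rw [KaehlerDifferential.kerTotal_eq] at hv
  exact (hker hv).1


noncomputable def lieDeriv (Dv : Derivation k A A) :
    KaehlerDifferential k A →ₗ[k] KaehlerDifferential k A :=
  (((LinearMap.ker (Finsupp.linearCombination A (D k A) :
        (A →₀ A) →ₗ[A] KaehlerDifferential k A)).restrictScalars k).liftQ (rawLD Dv)
      (fun v hv => rawLD_ker Dv v hv)) ∘ₗ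
    ((Submodule.Quotient.restrictScalarsEquiv k _).symm.toLinearMap ∘ₗ
      (((Finsupp.linearCombination A (D k A) : (A →₀ A) →ₗ[A]
          KaehlerDifferential k A).quotKerEquivOfSurjective
        (KaehlerDifferential.linearCombination_surjective k A)).symm.restrictScalars
          k).toLinearMap)

theorem lieDeriv_total (Dv : Derivation k A A) (v : A →₀ A) :
    lieDeriv Dv (Finsupp.linearCombination A (D k A) v) = rawLD Dv v := by
  have h1 : ((Finsupp.linearCombination A (D k A) : (A →₀ A) →ₗ[A]
      KaehlerDifferential k A).quotKerEquivOfSurjective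
        (KaehlerDifferential.linearCombination_surjective k A)).symm
      (Finsupp.linearCombination A (D k A) v) = Submodule.Quotient.mk v := by
    rw [LinearEquiv.symm_apply_eq]; rfl
  simp only [lieDeriv, LinearMap.comp_apply, LinearEquiv.coe_coe,
    LinearEquiv.restrictScalars_apply, h1,
    Submodule.Quotient.restrictScalarsEquiv_symm_mk, Submodule.liftQ_apply]
  rfl

theorem lieDeriv_smul_D (Dv : Derivation k A A) (f g : A) :
    lieDeriv Dv (f • D k A g) = Dv f • D k A g + f • D k A (Dv g) := by
  have := lieDeriv_total Dv (single g f)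
  rwa [linearCombination_single, rawLD_single] at this

theorem lieDeriv_D (Dv : Derivation k A A) (g : A) :
    lieDeriv Dv (D k A g) = D k A (Dv g) := by
  have := lieDeriv_smul_D Dv 1 g
  simpa using this


theorem lieDeriv_leibniz (Dv : Derivation k A A) (x : KaehlerDifferential k A) (f : A) :
    lieDeriv Dv (f • x) = Dv f • x + f • lieDeriv Dv x := by
  revert f
  induction x using kd_ind with
  | hd g => intro f; rw [lieDeriv_smul_D, lieDeriv_D]
  | h0 => simp
  | hadd x y hx hy =>
      intro f; simp only [smul_add, map_add, hx, hy]; abel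
  | hsmul a x hx =>
      intro f
      rw [smul_smul, hx, hx, Derivation.leibniz]
      simp only [smul_eq_mul, add_smul, smul_add, smul_smul]
      module

theorem lieDeriv_add (D1 D2 : Derivation k A A) (x : KaehlerDifferential k A) :
    lieDeriv (D1 + D2) x = lieDeriv D1 x + lieDeriv D2 x := by
  induction x using kd_ind with
  | hd g => simp only [lieDeriv_D, Derivation.add_apply, map_add]
  | h0 => simp
  | hadd x y hx hy => simp only [map_add, hx, hy]; abel
  | hsmul a x hx =>
      simp only [lieDeriv_leibniz, hx, Derivation.add_apply, add_smul, smul_add]; abel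

theorem lieDeriv_zero (x : KaehlerDifferential k A) : lieDeriv (0 : Derivation k A A) x = 0 := by
  have h := lieDeriv_add (k := k) (A := A) 0 0 x
  rw [add_zero] at h
  exact (add_eq_right.mp h.symm)

theorem lieDeriv_smul (a : A) (Dv : Derivation k A A) (x : KaehlerDifferential k A) :
    lieDeriv (a • Dv) x = a • lieDeriv Dv x + Dv.liftKaehlerDifferential x • D k A a := by
  induction x using kd_ind with
  | hd g =>
      rw [lieDeriv_D, lieDeriv_D, Derivation.smul_apply, smul_eq_mul, Derivation.leibniz,
        Derivation.liftKaehlerDifferential_comp_D]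
  | h0 => simp
  | hadd x y hx hy =>
      simp only [map_add, hx, hy, add_smul, smul_add]; abel
  | hsmul f x hx =>
      rw [lieDeriv_leibniz, lieDeriv_leibniz, hx, Derivation.smul_apply, map_smul]
      simp only [smul_add, smul_smul, smul_eq_mul]
      module


section Master
variable (δ : Derivation k A (Derivation k A A))

/-- the anchor -/
noncomputable def anch : KaehlerDifferential k A →ₗ[A] Derivation k A A :=
  δ.liftKaehlerDifferential

@[simp] theorem anch_D (f : A) : anch δ (D k A f) = δ f :=
  Derivation.liftKaehlerDifferential_comp_D δ f

theorem lift_zero :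
    ((0 : Derivation k A A).liftKaehlerDifferential :
      KaehlerDifferential k A →ₗ[A] A) = 0 :=
  (KaehlerDifferential.linearMapEquivDerivation k A).symm.map_zero

/-- the pairing -/
noncomputable def pr (x y : KaehlerDifferential k A) : A :=
  (anch δ x).liftKaehlerDifferential y

theorem pr_lift (x y : KaehlerDifferential k A) :
    (anch δ x).liftKaehlerDifferential y = pr δ x y := rfl

theorem pr_D_left (f : A) (y : KaehlerDifferential k A) :
    pr δ (D k A f) y = (δ f).liftKaehlerDifferential y := by rw [pr, anch_D]

@[simp] theorem pr_D_D (f g : A) : pr δ (D k A f) (D k A g) = δ f g := by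
  rw [pr_D_left, Derivation.liftKaehlerDifferential_comp_D]

theorem pr_add_left (x x' y : KaehlerDifferential k A) :
    pr δ (x + x') y = pr δ x y + pr δ x' y := by
  rw [pr, pr, pr, map_add]
  have : ((anch δ x + anch δ x').liftKaehlerDifferential :
      KaehlerDifferential k A →ₗ[A] A) =
      (anch δ x).liftKaehlerDifferential + (anch δ x').liftKaehlerDifferential := by
    apply ((KaehlerDifferential.linearMapEquivDerivation k A).symm.map_add _ _)
  rw [this]; rfl

theorem pr_smul_left (a : A) (x y : KaehlerDifferential k A) :
    pr δ (a • x) y = a * pr δ x y := by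
  rw [pr, pr, map_smul]
  have : ((a • anch δ x).liftKaehlerDifferential :
      KaehlerDifferential k A →ₗ[A] A) = a • (anch δ x).liftKaehlerDifferential := by
    apply ((KaehlerDifferential.linearMapEquivDerivation k A).symm.map_smul a _)
  rw [this]; rfl

theorem pr_add_right (x y y' : KaehlerDifferential k A) :
    pr δ x (y + y') = pr δ x y + pr δ x y' := map_add _ _ _

theorem pr_smul_right (a : A) (x y : KaehlerDifferential k A) :
    pr δ x (a • y) = a * pr δ x y := by rw [pr, map_smul, smul_eq_mul]; rfl

theorem pr_skew (hskew : ∀ f g, δ f g = - δ g f)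
    (x y : KaehlerDifferential k A) : pr δ x y = - pr δ y x := by
  rw [← add_eq_zero_iff_eq_neg]
  induction x using kd_ind with
  | hd f =>
      induction y using kd_ind with
      | hd g => rw [pr_D_D, pr_D_D, hskew, neg_add_cancel]
      | h0 => simp [pr, lift_zero]
      | hadd y y' hy hy' =>
          rw [pr_add_right, pr_add_left]
          calc _ = (pr δ (D k A f) y + pr δ y (D k A f))
                + (pr δ (D k A f) y' + pr δ y' (D k A f)) := by ring
          _ = 0 := by rw [hy, hy', add_zero]
      | hsmul a y hy =>
          rw [pr_smul_right, pr_smul_left, ← mul_add, hy, mul_zero]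
  | h0 => simp [pr, lift_zero]
  | hadd x x' hx hx' =>
      rw [pr_add_right, pr_add_left]
      calc _ = (pr δ x y + pr δ y x) + (pr δ x' y + pr δ y x') := by ring
      _ = 0 := by rw [hx, hx', add_zero]
  | hsmul a x hx =>
      rw [pr_smul_right, pr_smul_left, ← mul_add, hx, mul_zero]


/-- the Koszul bracket -/
noncomputable def bk (x y : KaehlerDifferential k A) : KaehlerDifferential k A :=
  lieDeriv (anch δ x) y - lieDeriv (anch δ y) x - D k A (pr δ x y)

theorem bk_D_D (hskew : ∀ f g, δ f g = - δ g f) (f g : A) :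
    bk δ (D k A f) (D k A g) = D k A (δ f g) := by
  rw [bk, anch_D, anch_D, lieDeriv_D, lieDeriv_D, pr_D_D, hskew g f, map_neg]
  abel

theorem bk_add_left (x x' y : KaehlerDifferential k A) :
    bk δ (x + x') y = bk δ x y + bk δ x' y := by
  rw [bk, bk, bk, map_add, lieDeriv_add, map_add, pr_add_left, map_add]
  abel

theorem bk_add_right (x y y' : KaehlerDifferential k A) :
    bk δ x (y + y') = bk δ x y + bk δ x y' := by
  rw [bk, bk, bk, map_add, map_add, lieDeriv_add, pr_add_right, map_add]
  abel

theorem bk_zero_left (y : KaehlerDifferential k A) : bk δ 0 y = 0 := by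
  have h := bk_add_left δ 0 0 y
  rw [add_zero] at h
  exact (add_eq_right.mp h.symm)

theorem bk_zero_right (x : KaehlerDifferential k A) : bk δ x 0 = 0 := by
  have h := bk_add_right δ x 0 0
  rw [add_zero] at h
  exact (add_eq_right.mp h.symm)

theorem bk_antisym (hskew : ∀ f g, δ f g = - δ g f) (x y : KaehlerDifferential k A) :
    bk δ x y = - bk δ y x := by
  rw [bk, bk, pr_skew δ hskew x y, map_neg]
  abel

theorem bk_compat (hskew : ∀ f g, δ f g = - δ g f) (x y : KaehlerDifferential k A) (f : A) :
    bk δ x (f • y) = anch δ x f • y + f • bk δ x y := by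
  rw [bk, bk, lieDeriv_leibniz, map_smul, lieDeriv_smul, pr_lift,
    pr_smul_right, Derivation.leibniz, pr_skew δ hskew y x, smul_sub, smul_sub]
  simp only [smul_eq_mul, neg_smul, smul_add]
  abel

theorem bk_smul_left (hskew : ∀ f g, δ f g = - δ g f) (a : A)
    (x y : KaehlerDifferential k A) :
    bk δ (a • x) y = a • bk δ x y - anch δ y a • x := by
  rw [bk_antisym δ hskew, bk_compat δ hskew, bk_antisym δ hskew x y]
  simp only [smul_neg]
  abel


theorem lie_smul_left_der (a : A) (D E : Derivation k A A) :
    ⁅a • D, E⁆ = a • ⁅D, E⁆ - E a • D := by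
  ext b
  simp only [Derivation.commutator_apply, Derivation.smul_apply, Derivation.sub_apply,
    smul_eq_mul, Derivation.leibniz]
  ring

theorem lie_smul_right_der (a : A) (D E : Derivation k A A) :
    ⁅D, a • E⁆ = a • ⁅D, E⁆ + D a • E := by
  ext b
  simp only [Derivation.commutator_apply, Derivation.smul_apply, Derivation.add_apply,
    smul_eq_mul, Derivation.leibniz]
  ring

variable (hskew : ∀ f g, δ f g = - δ g f)
  (hjac : ∀ f g a, δ f (δ g a) - δ g (δ f a) = δ (δ f g) a)

include hskew hjac in
theorem anch_bk : ∀ x y, anch δ (bk δ x y) = ⁅anch δ x, anch δ y⁆ := by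
  have base : ∀ f y, anch δ (bk δ (D k A f) y) = ⁅anch δ (D k A f), anch δ y⁆ := by
    intro f
    refine kd_ind ?_ ?_ ?_ ?_
    · intro g
      rw [bk_D_D δ hskew, anch_D, anch_D, anch_D]
      ext a
      rw [Derivation.commutator_apply]
      exact (hjac f g a).symm
    · rw [bk_zero_right, map_zero]; rw [lie_zero]
    · intro y y' hy hy'
      rw [bk_add_right, map_add, map_add, hy, hy', lie_add]
    · intro a y hy
      rw [bk_compat δ hskew, map_add, map_smul, map_smul, map_smul, hy,
        lie_smul_right_der, add_comm]
  refine kd_ind ?_ ?_ ?_ ?_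
  · exact base
  · intro y; rw [bk_zero_left, map_zero]; rw [zero_lie]
  · intro x x' hx hx' y
    rw [bk_add_left, map_add, map_add, hx, hx', add_lie]
  · intro a x hx y
    rw [bk_smul_left δ hskew, map_sub, map_smul, map_smul, map_smul, hx,
      lie_smul_left_der]

include hskew hjac in
theorem jacE : ∀ x y z, bk δ x (bk δ y z) - bk δ (bk δ x y) z - bk δ y (bk δ x z) = 0 := by
  have bk_neg_left : ∀ u z, bk δ (-u) z = - bk δ u z := by
    intro u z
    have h := bk_add_left δ u (-u) z
    rw [add_neg_cancel, bk_zero_left] at h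
    exact eq_neg_of_add_eq_zero_right h.symm
  have bk_neg_right : ∀ x u, bk δ x (-u) = - bk δ x u := by
    intro x u
    have h := bk_add_right δ x u (-u)
    rw [add_neg_cancel, bk_zero_right] at h
    exact eq_neg_of_add_eq_zero_right h.symm
  have bk_sub_right : ∀ x u v, bk δ x (u - v) = bk δ x u - bk δ x v := by
    intro x u v
    rw [sub_eq_add_neg, bk_add_right, bk_neg_right, sub_eq_add_neg]
  have hab := anch_bk δ hskew hjac
  -- smul rule in the third slot
  have hz : ∀ (a : A) x y z, bk δ x (bk δ y (a • z)) - bk δ (bk δ x y) (a • z)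
      - bk δ y (bk δ x (a • z)) =
      a • (bk δ x (bk δ y z) - bk δ (bk δ x y) z - bk δ y (bk δ x z)) := by
    intro a x y z
    simp only [bk_compat δ hskew, bk_add_right]
    rw [hab, Derivation.commutator_apply]
    simp only [smul_sub, sub_smul, smul_smul]
    abel
  -- smul rule in the second slot
  have hy : ∀ (a : A) x y z, bk δ x (bk δ (a • y) z) - bk δ (bk δ x (a • y)) z
      - bk δ (a • y) (bk δ x z) =
      a • (bk δ x (bk δ y z) - bk δ (bk δ x y) z - bk δ y (bk δ x z)) := by
    intro a x y z
    simp only [bk_smul_left δ hskew, bk_compat δ hskew, bk_add_left, bk_add_right,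
      bk_sub_right]
    rw [hab, Derivation.commutator_apply]
    simp only [smul_sub, sub_smul, smul_smul]
    abel
  -- swap rule
  have hswap : ∀ x y z, bk δ x (bk δ y z) - bk δ (bk δ x y) z - bk δ y (bk δ x z) =
      - (bk δ y (bk δ x z) - bk δ (bk δ y x) z - bk δ x (bk δ y z)) := by
    intro x y z
    rw [bk_antisym δ hskew y x, bk_neg_left]
    abel
  refine kd_ind ?_ ?_ ?_ ?_
  · intro f
    refine kd_ind ?_ ?_ ?_ ?_
    · intro g
      refine kd_ind ?_ ?_ ?_ ?_
      · intro h
        simp only [bk_D_D δ hskew]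
        rw [← map_sub, ← map_sub,
          show δ f (δ g h) - δ (δ f g) h - δ g (δ f h) = 0 by
            rw [← hjac f g h]; ring,
          map_zero]
      · simp only [bk_zero_right, bk_zero_left, sub_zero, sub_self]
      · intro z z' h1 h2
        simp only [bk_add_right] at *
        calc _ = (bk δ (D k A f) (bk δ (D k A g) z) - bk δ (bk δ (D k A f) (D k A g)) z
              - bk δ (D k A g) (bk δ (D k A f) z))
            + (bk δ (D k A f) (bk δ (D k A g) z') - bk δ (bk δ (D k A f) (D k A g)) z'
              - bk δ (D k A g) (bk δ (D k A f) z')) := by abel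
        _ = 0 := by rw [h1, h2, add_zero]
      · intro a z hz2
        rw [hz, hz2, smul_zero]
    · intro z
      simp only [bk_zero_left, bk_zero_right, sub_zero, zero_sub, neg_eq_zero, sub_self,
        sub_zero]
    · intro y y' h1 h2 z
      simp only [bk_add_left, bk_add_right]
      calc _ = (bk δ (D k A f) (bk δ y z) - bk δ (bk δ (D k A f) y) z
            - bk δ y (bk δ (D k A f) z))
          + (bk δ (D k A f) (bk δ y' z) - bk δ (bk δ (D k A f) y') z
            - bk δ y' (bk δ (D k A f) z)) := by abel
      _ = 0 := by rw [h1, h2, add_zero]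
    · intro a y hy2 z
      rw [hy, hy2, smul_zero]
  · intro y z
    simp only [bk_zero_left, bk_zero_right, sub_zero, zero_sub, neg_eq_zero, sub_self]
  · intro x x' h1 h2 y z
    simp only [bk_add_left, bk_add_right]
    calc _ = (bk δ x (bk δ y z) - bk δ (bk δ x y) z - bk δ y (bk δ x z))
        + (bk δ x' (bk δ y z) - bk δ (bk δ x' y) z - bk δ y (bk δ x' z)) := by abel
    _ = 0 := by rw [h1, h2, add_zero]
  · intro a x hx2 y z
    rw [hswap, hy, hswap, hx2 y z, neg_zero, smul_zero, neg_zero]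


end Master

section CharZeroPart
variable {k A : Type*} [Field k] [CharZero k] [CommRing A] [Algebra k A]
variable (δ : Derivation k A (Derivation k A A)) (hskew : ∀ f g, δ f g = - δ g f)

include hskew in
theorem pr_self (x : KaehlerDifferential k A) : pr δ x x = 0 := by
  have h := pr_skew δ hskew x x
  have h2 : (2 : k) • pr δ x x = 0 := by
    rw [two_smul]
    nth_rewrite 1 [h]
    rw [neg_add_cancel]
  have h3 := congrArg (fun t => ((2 : k)⁻¹ : k) • t) h2
  simpa [smul_smul, inv_mul_cancel₀ (two_ne_zero (α := k))] using h3

include hskew in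
theorem bk_self (x : KaehlerDifferential k A) : bk δ x x = 0 := by
  have := bk_antisym δ hskew x x
  have h2 : (2 : k) • bk δ x x = 0 := by
    rw [two_smul]
    nth_rewrite 1 [this]
    rw [neg_add_cancel]
  have h3 := congrArg (fun t => ((2 : k)⁻¹ : k) • t) h2
  simpa [smul_smul, inv_mul_cancel₀ (two_ne_zero (α := k))] using h3

omit [CharZero k] in
include hskew in
theorem bk_ksmul_left (c : k) (x y : KaehlerDifferential k A) :
    bk δ (c • x) y = c • bk δ x y := by
  rw [← algebraMap_smul A c x, bk_smul_left δ hskew, Derivation.map_algebraMap,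
    zero_smul, sub_zero, algebraMap_smul]

omit [CharZero k] in
include hskew in
theorem bk_ksmul_right (c : k) (x y : KaehlerDifferential k A) :
    bk δ x (c • y) = c • bk δ x y := by
  rw [← algebraMap_smul A c y, bk_compat δ hskew, Derivation.map_algebraMap,
    zero_smul, zero_add, algebraMap_smul]

end CharZeroPart

section Build
variable {k A : Type*} [CommRing k] [CommRing A] [Algebra k A]
variable (P : A → A → A)

/-- the Hamiltonian derivation of `f` -/
def mkH (hadd2 : ∀ f g h : A, P f (g + h) = P f g + P f h)
    (hsm2 : ∀ (c : k) (f g : A), P f (c • g) = c • P f g)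
    (hone : ∀ f : A, P f 1 = 0)
    (hleib : ∀ f g h : A, P f (g * h) = P f g * h + g * P f h) (f : A) :
    Derivation k A A where
  toLinearMap :=
    { toFun := P f
      map_add' := hadd2 f
      map_smul' := fun c g => hsm2 c f g }
  map_one_eq_zero' := hone f
  leibniz' := fun a b => by
    simp only [LinearMap.coe_mk, AddHom.coe_mk, smul_eq_mul]
    rw [hleib f a b]; ring

/-- the Poisson structure as a derivation into derivations -/
def mkδ (hadd1 : ∀ f g h : A, P (f + g) h = P f h + P g h)
    (hadd2 : ∀ f g h : A, P f (g + h) = P f g + P f h)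
    (hsm1 : ∀ (c : k) (f g : A), P (c • f) g = c • P f g)
    (hsm2 : ∀ (c : k) (f g : A), P f (c • g) = c • P f g)
    (hone : ∀ f : A, P f 1 = 0)
    (hone1 : ∀ f : A, P 1 f = 0)
    (hskew : ∀ f g : A, P g f = - P f g)
    (hleib : ∀ f g h : A, P f (g * h) = P f g * h + g * P f h) :
    Derivation k A (Derivation k A A) where
  toLinearMap :=
    { toFun := mkH P hadd2 hsm2 hone hleib
      map_add' := fun f g => Derivation.ext fun a => hadd1 f g a
      map_smul' := fun c f => Derivation.ext fun a => by
        exact hsm1 c f a }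
  map_one_eq_zero' := Derivation.ext fun a => hone1 a
  leibniz' := fun f g => Derivation.ext fun a => by
    show P (f * g) a = ((f • mkH P hadd2 hsm2 hone hleib g
      + g • mkH P hadd2 hsm2 hone hleib f : Derivation k A A)) a
    rw [Derivation.add_apply, Derivation.smul_apply, Derivation.smul_apply]
    show P (f * g) a = f • P g a + g • P f a
    rw [hskew a (f * g), hleib a f g, neg_add, smul_eq_mul, smul_eq_mul,
      hskew f a, hskew g a]
    ring

@[simp] theorem mkδ_apply (hadd1) (hadd2) (hsm1) (hsm2) (hone) (hone1) (hskew) (hleib)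
    (f g : A) :
    (mkδ (k := k) P hadd1 hadd2 hsm1 hsm2 hone hone1 hskew hleib) f g = P f g := rfl

end Build

end S15

open KaehlerDifferential in
/-- the Kähler differentials of a Poisson algebra form a
Lie-Rinehart algebra, with `[df, dg] = d{f,g}`, the Leibniz-type rule
`[df, g·dg'] = {f,g}·dg' + g·[df,dg']`, and anchor `ω(df) = {f, ·}`. -/
theorem statement15 (k A : Type*) [Field k] [CharZero k] [CommRing A] [Algebra k A]
    (P : A → A → A)
    (hadd1 : ∀ f g h : A, P (f + g) h = P f h + P g h)
    (hadd2 : ∀ f g h : A, P f (g + h) = P f g + P f h)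
    (hsm1 : ∀ (c : k) (f g : A), P (c • f) g = c • P f g)
    (hsm2 : ∀ (c : k) (f g : A), P f (c • g) = c • P f g)
    (halt : ∀ f : A, P f f = 0)
    (hjac : ∀ f g h : A, P f (P g h) + P g (P h f) + P h (P f g) = 0)
    (hleib : ∀ f g h : A, P f (g * h) = P f g * h + g * P f h) :
    ∃ S : LieRinehartStr k A (KaehlerDifferential k A),
      (∀ f g : A, S.bracket (KaehlerDifferential.D k A f) (KaehlerDifferential.D k A g) =
          KaehlerDifferential.D k A (P f g)) ∧
      (∀ f g g' : A, S.bracket (KaehlerDifferential.D k A f)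
            (g • KaehlerDifferential.D k A g') =
          P f g • KaehlerDifferential.D k A g' +
            g • S.bracket (KaehlerDifferential.D k A f) (KaehlerDifferential.D k A g')) ∧
      (∀ f a : A, S.anchor (KaehlerDifferential.D k A f) a = P f a) := by
  have hskewP : ∀ f g : A, P g f = - P f g := by
    intro f g
    have h0 := halt (f + g)
    rw [hadd1, hadd2, hadd2, halt, halt] at h0
    linear_combination h0
  have hone : ∀ f : A, P f 1 = 0 := by
    intro f
    have h := hleib f 1 1
    rw [mul_one] at h
    linear_combination - h
  have hone1 : ∀ f : A, P 1 f = 0 := by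
    intro f
    rw [hskewP f 1, hone, neg_zero]
  have hjacδ : ∀ f g a : A, P f (P g a) - P g (P f a) = P (P f g) a := by
    intro f g a
    have hPzero : ∀ b : A, P b 0 = 0 := by
      intro b
      have h := hadd2 b 0 0
      rw [add_zero] at h
      linear_combination - h
    have hneg : ∀ (b u : A), P b (-u) = - P b u := by
      intro b u
      have h := hadd2 b u (-u)
      rw [add_neg_cancel, hPzero] at h
      linear_combination - h
    have h := hjac f g a
    rw [hskewP f a, hneg g (P f a), hskewP (P f g) a] at h
    linear_combination h
  set δ : Derivation k A (Derivation k A A) :=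
    S15.mkδ P hadd1 hadd2 hsm1 hsm2 hone hone1 hskewP hleib with hδ
  have happ : ∀ f g : A, δ f g = P f g := fun f g => rfl
  have hskewδ : ∀ f g : A, δ f g = - δ g f := by
    intro f g; rw [happ, happ]; exact hskewP g f
  have hjacδ' : ∀ f g a : A, δ f (δ g a) - δ g (δ f a) = δ (δ f g) a := by
    intro f g a; simp only [happ]; exact hjacδ f g a
  refine ⟨{ bracket := S15.bk δ
            anchor := S15.anch δ
            bracket_add_left := fun x y z => S15.bk_add_left δ x y z
            bracket_add_right := fun x y z => S15.bk_add_right δ x y z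
            bracket_smul_left := fun c x y => S15.bk_ksmul_left δ hskewδ c x y
            bracket_smul_right := fun c x y => S15.bk_ksmul_right δ hskewδ c x y
            bracket_self := fun x => S15.bk_self δ hskewδ x
            jacobi := fun x y z => by
              have h := S15.jacE δ hskewδ hjacδ' x y z
              rw [sub_sub, sub_eq_zero] at h
              exact h
            anchor_bracket := fun x y => S15.anch_bk δ hskewδ hjacδ' x y
            compat := fun x y f => S15.bk_compat δ hskewδ x y f }, ?_, ?_, ?_⟩
  · intro f g
    exact S15.bk_D_D δ hskewδ f g
  · intro f g g'
    show S15.bk δ (KaehlerDifferential.D k A f) (g • KaehlerDifferential.D k A g') =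
      P f g • KaehlerDifferential.D k A g' +
        g • S15.bk δ (KaehlerDifferential.D k A f) (KaehlerDifferential.D k A g')
    rw [S15.bk_compat δ hskewδ, S15.anch_D, happ]
  · intro f a
    show S15.anch δ (KaehlerDifferential.D k A f) a = P f a
    rw [S15.anch_D, happ]
end
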